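/- In the setting of an augmented rack with G acting on Y, the pairing μ is associative: μ_Y(μ_Y(η⊗γ)⊗γ') = μ_Y(η⊗μ_G(γ⊗γ')) for chains η ∈ C_m(Y;X), γ ∈ C_k(G;X), γ' ∈ C_l(G;X). -/

import Mathlib

/-- An augmented rack `(X, G, η, ρ)`. -/
structure AugmentedRack (X G : Type*) [Group G] where
  act : X → X → X
  act_bij : ∀ b : X, Function.Bijective fun a => act a b
  act_dist : ∀ a b c : X, act (act a b) c = act (act a c) (act b c)
  rho : X → G → X
  rho_one : ∀ a : X, rho a 1 = a
  rho_mul : ∀ (a : X) (g h : G), rho (rho a g) h = rho a (g * h)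
  rho_hom : ∀ (a b : X) (g : G), rho (act a b) g = act (rho a g) (rho b g)
  eta : X → G
  eta_cond : ∀ (a : X) (g : G), eta (rho a g) = g⁻¹ * eta a * g

/-- The pairing `μ_Y((y;x₁,…,x_m) ⊗ (g;x'₁,…,x'_k)) = (yg; x₁g,…,x_mg, x'₁,…,x'_k)`,
extended bilinearly (with `μ_G` the special case `Y = G`). -/
noncomputable def muPair {Y X G : Type*} (smul : Y → G → Y) (rho : X → G → X)
    (a : (Y × List X) →₀ ℤ) (b : (G × List X) →₀ ℤ) : (Y × List X) →₀ ℤ :=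
  a.sum fun q z => b.sum fun r w =>
    Finsupp.single (smul q.1 r.1, q.2.map (fun x => rho x r.1) ++ r.2) (z * w)

namespace muPairAux

variable {Y X G : Type*} (smul : Y → G → Y) (rho : X → G → X)

lemma zero_left (b : (G × List X) →₀ ℤ) : muPair smul rho 0 b = 0 := by
  simp [muPair]

lemma zero_right (a : (Y × List X) →₀ ℤ) : muPair smul rho a 0 = 0 := by
  simp [muPair]

lemma add_left (a a' : (Y × List X) →₀ ℤ) (b : (G × List X) →₀ ℤ) :
    muPair smul rho (a + a') b = muPair smul rho a b + muPair smul rho a' b := by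
  unfold muPair
  apply Finsupp.sum_add_index' <;> intro q <;> simp [add_mul, Finsupp.single_add,
    Finsupp.sum_add]

lemma add_right (a : (Y × List X) →₀ ℤ) (b b' : (G × List X) →₀ ℤ) :
    muPair smul rho a (b + b') = muPair smul rho a b + muPair smul rho a b' := by
  unfold muPair
  rw [← Finsupp.sum_add]
  refine Finsupp.sum_congr fun q hq => ?_
  apply Finsupp.sum_add_index' <;> intro r <;> simp [mul_add, Finsupp.single_add]

lemma single_single (q : Y × List X) (z : ℤ) (r : G × List X) (w : ℤ) :
    muPair smul rho (Finsupp.single q z) (Finsupp.single r w) =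
      Finsupp.single (smul q.1 r.1, q.2.map (fun x => rho x r.1) ++ r.2) (z * w) := by
  unfold muPair
  rw [Finsupp.sum_single_index, Finsupp.sum_single_index] <;>
    simp [Finsupp.sum_single_index]

end muPairAux

lemma assoc_sss {X G Y : Type*} [Group G]
    (rho : X → G → X)
    (rho_mul : ∀ (a : X) (g h : G), rho (rho a g) h = rho a (g * h))
    (smul : Y → G → Y)
    (hsmul_mul : ∀ (y : Y) (g h : G), smul (smul y g) h = smul y (g * h))
    (q : Y × List X) (z : ℤ) (r : G × List X) (w : ℤ)
    (t : G × List X) (u : ℤ) :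
    muPair smul rho (muPair smul rho (Finsupp.single q z) (Finsupp.single r w))
        (Finsupp.single t u) =
      muPair smul rho (Finsupp.single q z)
        (muPair (fun g h : G => g * h) rho (Finsupp.single r w) (Finsupp.single t u)) := by
  rw [muPairAux.single_single, muPairAux.single_single, muPairAux.single_single,
    muPairAux.single_single]
  have h2 : List.map (fun x => rho x t.1) (List.map (fun x => rho x r.1) q.2)
      = List.map (fun x => rho x (r.1 * t.1)) q.2 := by
    simp [List.map_map, Function.comp, rho_mul]
  simp only [List.map_append, h2, List.append_assoc, mul_assoc, hsmul_mul]

lemma assoc_ssc {X G Y : Type*} [Group G]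
    (rho : X → G → X)
    (rho_mul : ∀ (a : X) (g h : G), rho (rho a g) h = rho a (g * h))
    (smul : Y → G → Y)
    (hsmul_mul : ∀ (y : Y) (g h : G), smul (smul y g) h = smul y (g * h))
    (q : Y × List X) (z : ℤ) (r : G × List X) (w : ℤ)
    (c : (G × List X) →₀ ℤ) :
    muPair smul rho (muPair smul rho (Finsupp.single q z) (Finsupp.single r w)) c =
      muPair smul rho (Finsupp.single q z)
        (muPair (fun g h : G => g * h) rho (Finsupp.single r w) c) := by
  induction c using Finsupp.induction₂ with
  | zero => simp [muPairAux.zero_right]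
  | add_single t u c _ _ ih =>
      rw [muPairAux.add_right, muPairAux.add_right, muPairAux.add_right, ih,
        assoc_sss rho rho_mul smul hsmul_mul]

lemma assoc_sbc {X G Y : Type*} [Group G]
    (rho : X → G → X)
    (rho_mul : ∀ (a : X) (g h : G), rho (rho a g) h = rho a (g * h))
    (smul : Y → G → Y)
    (hsmul_mul : ∀ (y : Y) (g h : G), smul (smul y g) h = smul y (g * h))
    (q : Y × List X) (z : ℤ) (b c : (G × List X) →₀ ℤ) :
    muPair smul rho (muPair smul rho (Finsupp.single q z) b) c =
      muPair smul rho (Finsupp.single q z) (muPair (fun g h : G => g * h) rho b c) := by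
  induction b using Finsupp.induction₂ with
  | zero => simp [muPairAux.zero_left, muPairAux.zero_right]
  | add_single r w b _ _ ih =>
      rw [muPairAux.add_right, muPairAux.add_left, muPairAux.add_left,
        muPairAux.add_right, ih, assoc_ssc rho rho_mul smul hsmul_mul]

theorem stmt8_aux {X G Y : Type*} [Group G]
    (rho : X → G → X)
    (rho_mul : ∀ (a : X) (g h : G), rho (rho a g) h = rho a (g * h))
    (smul : Y → G → Y)
    (hsmul_mul : ∀ (y : Y) (g h : G), smul (smul y g) h = smul y (g * h))
    (a : (Y × List X) →₀ ℤ) (b c : (G × List X) →₀ ℤ) :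
    muPair smul rho (muPair smul rho a b) c =
      muPair smul rho a (muPair (fun g h : G => g * h) rho b c) := by
  induction a using Finsupp.induction₂ with
  | zero => simp [muPairAux.zero_left]
  | add_single q z a _ _ ih =>
      rw [muPairAux.add_left, muPairAux.add_left, muPairAux.add_left, ih,
        assoc_sbc rho rho_mul smul hsmul_mul]

/-- Associativity: `μ_Y(μ_Y(η⊗γ)⊗γ') = μ_Y(η⊗μ_G(γ⊗γ'))`. -/
theorem stmt_8 {X G Y : Type*} [Group G] (R : AugmentedRack X G)
    (smul : Y → G → Y)
    (hsmul_one : ∀ y : Y, smul y 1 = y)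
    (hsmul_mul : ∀ (y : Y) (g h : G), smul (smul y g) h = smul y (g * h))
    (a : (Y × List X) →₀ ℤ) (b c : (G × List X) →₀ ℤ) :
    muPair smul R.rho (muPair smul R.rho a b) c =
      muPair smul R.rho a (muPair (fun g h : G => g * h) R.rho b c) :=
  stmt8_aux R.rho R.rho_mul smul hsmul_mul a b c
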